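/- Let I ⊆ [0, ∞) be a measurable set with finite Lebesgue measure |I|. Then for every natural number n, (1/n!) ∫_I s^n e^{−s} ds ≤ 1 − e^{−|I|}. -/

import Mathlib

open MeasureTheory

lemma exp_neg_integrableOn_Ici0 : IntegrableOn (fun u : ℝ => Real.exp (-u)) (Set.Ici 0) := by
  have h := exp_neg_integrableOn_Ioi (-1 : ℝ) (by norm_num : (0:ℝ) < 1)
  simp only [neg_mul, one_mul] at h
  exact h.mono_set (fun x hx => lt_of_lt_of_le (by norm_num : (-1:ℝ) < 0) hx)

lemma bathtub_exp (J : Set ℝ) (hmeas : MeasurableSet J) (hsub : J ⊆ Set.Ici 0)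
    (hfin : volume J ≠ ⊤) :
    ∫ u in J, Real.exp (-u) ≤ 1 - Real.exp (-(volume J).toReal) := by
  set m := (volume J).toReal with hm
  have hm0 : 0 ≤ m := ENNReal.toReal_nonneg
  set A := J ∩ Set.Icc 0 m with hA
  set B := J ∩ Set.Ioi m with hB
  set C := Set.Icc 0 m \ J with hC
  have measA : MeasurableSet A := hmeas.inter measurableSet_Icc
  have measB : MeasurableSet B := hmeas.inter measurableSet_Ioi
  have measC : MeasurableSet C := measurableSet_Icc.diff hmeas
  have hJ : A ∪ B = J := by
    ext u
    simp only [hA, hB, Set.mem_union, Set.mem_inter_iff, Set.mem_Icc, Set.mem_Ioi]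
    constructor
    · rintro (⟨h, _⟩ | ⟨h, _⟩) <;> exact h
    · intro hu
      rcases le_or_gt u m with h | h
      · exact Or.inl ⟨hu, hsub hu, h⟩
      · exact Or.inr ⟨hu, h⟩
  have hAC : A ∪ C = Set.Icc 0 m := by
    ext u
    simp only [hA, hC, Set.mem_union, Set.mem_inter_iff, Set.mem_diff]
    by_cases hu : u ∈ J <;> tauto
  have hdisjAB : Disjoint A B := by
    rw [Set.disjoint_left]
    rintro x ⟨_, _, hx2⟩ ⟨_, hx3⟩
    exact absurd hx3 (not_lt.mpr hx2)
  have hdisjAC : Disjoint A C := by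
    rw [Set.disjoint_left]
    rintro x ⟨hx1, _⟩ ⟨_, hx2⟩
    exact hx2 hx1
  -- integrability
  have hintA : IntegrableOn (fun u : ℝ => Real.exp (-u)) A :=
    exp_neg_integrableOn_Ici0.mono_set (fun x hx => hsub hx.1)
  have hintB : IntegrableOn (fun u : ℝ => Real.exp (-u)) B :=
    exp_neg_integrableOn_Ici0.mono_set (fun x hx => hsub hx.1)
  have hintC : IntegrableOn (fun u : ℝ => Real.exp (-u)) C :=
    exp_neg_integrableOn_Ici0.mono_set (fun x hx => hx.1.1)
  -- measures
  have hfinA : volume A ≠ ⊤ := fun h => hfin (top_le_iff.mp (h ▸ measure_mono Set.inter_subset_left))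
  have hfinB : volume B ≠ ⊤ := fun h => hfin (top_le_iff.mp (h ▸ measure_mono Set.inter_subset_left))
  have hIccvol : volume (Set.Icc (0:ℝ) m) = ENNReal.ofReal m := by
    rw [Real.volume_Icc, sub_zero]
  have hfinC : volume C ≠ ⊤ := by
    intro h
    have h2 : volume C ≤ volume (Set.Icc (0:ℝ) m) := measure_mono Set.diff_subset
    rw [h, hIccvol, top_le_iff] at h2
    exact ENNReal.ofReal_ne_top h2
  have hab : (volume A).toReal + (volume B).toReal = m := by
    rw [← ENNReal.toReal_add hfinA hfinB, ← measure_union hdisjAB measB, hJ]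
  have hcval : (volume C).toReal = m - (volume A).toReal := by
    have hCeq : C = Set.Icc 0 m \ A := by
      ext u
      simp only [hC, hA, Set.mem_diff, Set.mem_inter_iff]
      tauto
    have hAsub : A ⊆ Set.Icc 0 m := Set.inter_subset_right
    rw [hCeq, measure_diff hAsub measA.nullMeasurableSet hfinA,
      ENNReal.toReal_sub_of_le (measure_mono hAsub) (by rw [hIccvol]; exact ENNReal.ofReal_ne_top),
      hIccvol, ENNReal.toReal_ofReal hm0]
  -- integral over Icc 0 m
  have hIcc : ∫ u in Set.Icc (0:ℝ) m, Real.exp (-u) = 1 - Real.exp (-m) := by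
    rw [integral_Icc_eq_integral_Ioc, ← intervalIntegral.integral_of_le hm0,
      intervalIntegral.integral_comp_neg (fun x => Real.exp x), integral_exp]
    simp
  -- splits
  have hsplit1 : ∫ u in J, Real.exp (-u) = (∫ u in A, Real.exp (-u)) + ∫ u in B, Real.exp (-u) := by
    rw [← hJ, setIntegral_union hdisjAB measB hintA hintB]
  have hsplit2 : (∫ u in A, Real.exp (-u)) + ∫ u in C, Real.exp (-u) = 1 - Real.exp (-m) := by
    rw [← setIntegral_union hdisjAC measC hintA hintC, hAC, hIcc]
  -- bound on B
  have hboundB : ∫ u in B, Real.exp (-u) ≤ (volume B).toReal * Real.exp (-m) := by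
    have h1 : ∫ u in B, Real.exp (-u) ≤ ∫ _u in B, Real.exp (-m) :=
      setIntegral_mono_on hintB (integrableOn_const hfinB) measB
        (fun x hx => Real.exp_le_exp.mpr (neg_le_neg (le_of_lt hx.2)))
    rwa [setIntegral_const, smul_eq_mul] at h1
  -- bound on C
  have hboundC : (volume C).toReal * Real.exp (-m) ≤ ∫ u in C, Real.exp (-u) := by
    have h1 : ∫ _u in C, Real.exp (-m) ≤ ∫ u in C, Real.exp (-u) :=
      setIntegral_mono_on (integrableOn_const hfinC) hintC measC
        (fun x hx => Real.exp_le_exp.mpr (neg_le_neg hx.1.2))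
    rwa [setIntegral_const, smul_eq_mul] at h1
  have hbc : (volume B).toReal = (volume C).toReal := by rw [hcval]; linarith
  rw [hsplit1]
  calc (∫ u in A, Real.exp (-u)) + ∫ u in B, Real.exp (-u)
      ≤ (∫ u in A, Real.exp (-u)) + (volume C).toReal * Real.exp (-m) := by
        rw [← hbc]; linarith
    _ ≤ (∫ u in A, Real.exp (-u)) + ∫ u in C, Real.exp (-u) := by linarith
    _ = 1 - Real.exp (-m) := hsplit2
open MeasureTheory Set

noncomputable def Gfun (n : ℕ) (s : ℝ) : ℝ :=
  Real.exp (-s) * ∑ k ∈ Finset.range (n + 1), s ^ k / (k.factorial : ℝ)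

noncomputable def gfun (n : ℕ) (s : ℝ) : ℝ := s ^ n * Real.exp (-s) / (n.factorial : ℝ)

lemma hasDerivAt_Gfun (n : ℕ) (s : ℝ) : HasDerivAt (Gfun n) (-(gfun n s)) s := by
  have hexp : HasDerivAt (fun s : ℝ => Real.exp (-s)) (-Real.exp (-s)) s := by
    simpa [Function.comp_def] using ((Real.hasDerivAt_exp (-s)).comp s (hasDerivAt_neg s))
  have hsum : HasDerivAt (fun s : ℝ => ∑ k ∈ Finset.range (n + 1), s ^ k / (k.factorial : ℝ))
      (∑ k ∈ Finset.range n, s ^ k / (k.factorial : ℝ)) s := by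
    have h1 : HasDerivAt (fun s : ℝ => ∑ k ∈ Finset.range (n + 1), s ^ k / (k.factorial : ℝ))
        (∑ k ∈ Finset.range (n + 1), (k : ℝ) * s ^ (k - 1) / (k.factorial : ℝ)) s := by
      apply HasDerivAt.fun_sum
      intro k _
      exact (hasDerivAt_pow k s).div_const _
    convert h1 using 1
    rw [Finset.sum_range_succ']
    simp only [Nat.cast_zero, zero_mul, Nat.factorial_zero, Nat.cast_one, zero_div, add_zero]
    apply Finset.sum_congr rfl
    intro i _
    rw [Nat.factorial_succ]
    push_cast
    have : (i : ℝ) + 1 ≠ 0 := by positivity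
    field_simp
  have := hexp.mul hsum
  refine this.congr_deriv ?_
  unfold gfun
  rw [Finset.sum_range_succ]
  have hfac : (n.factorial : ℝ) ≠ 0 := Nat.cast_ne_zero.mpr n.factorial_ne_zero
  field_simp
  ring

lemma Gfun_pos (n : ℕ) (s : ℝ) (hs : 0 ≤ s) : 0 < Gfun n s := by
  unfold Gfun
  apply mul_pos (Real.exp_pos _)
  apply Finset.sum_pos'
  · intro k _
    positivity
  · exact ⟨0, Finset.mem_range.mpr (Nat.succ_pos n), by norm_num⟩

lemma gfun_le_Gfun (n : ℕ) (s : ℝ) (hs : 0 ≤ s) : gfun n s ≤ Gfun n s := by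
  unfold gfun Gfun
  rw [div_eq_mul_inv, mul_comm (s ^ n) (Real.exp (-s)), mul_assoc]
  apply mul_le_mul_of_nonneg_left _ (Real.exp_pos _).le
  rw [← div_eq_mul_inv]
  exact Finset.single_le_sum (f := fun k => s ^ k / (k.factorial : ℝ))
    (fun k _ => by positivity) (Finset.self_mem_range_succ n)

lemma gfun_nonneg (n : ℕ) (s : ℝ) (hs : 0 ≤ s) : 0 ≤ gfun n s := by
  unfold gfun; positivity

noncomputable def Ffun (n : ℕ) (s : ℝ) : ℝ := -Real.log (Gfun n s)

lemma hasDerivAt_Ffun (n : ℕ) (s : ℝ) (hs : 0 ≤ s) :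
    HasDerivAt (Ffun n) (gfun n s / Gfun n s) s := by
  have h := ((hasDerivAt_Gfun n s).log (Gfun_pos n s hs).ne').neg
  have e : Ffun n = -fun y => Real.log (Gfun n y) := rfl
  rw [e]; simpa [neg_div] using h

lemma Gfun_zero (n : ℕ) : Gfun n 0 = 1 := by
  unfold Gfun
  rw [neg_zero, Real.exp_zero, one_mul, Finset.sum_eq_single 0]
  · norm_num
  · intro k _ hk
    rw [zero_pow hk]
    simp
  · intro h
    exact absurd (Finset.mem_range.mpr (Nat.succ_pos n)) h

lemma Ffun_strictMonoOn (n : ℕ) : StrictMonoOn (Ffun n) (Set.Ici 0) := by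
  apply strictMonoOn_of_deriv_pos (convex_Ici 0)
  · exact fun x hx => ((hasDerivAt_Ffun n x hx).continuousAt).continuousWithinAt
  · intro x hx
    rw [interior_Ici] at hx
    rw [(hasDerivAt_Ffun n x hx.le).deriv]
    have hG := Gfun_pos n x hx.le
    have hg : 0 < gfun n x :=
      div_pos (mul_pos (pow_pos hx n) (Real.exp_pos _)) (by positivity)
    exact div_pos hg hG


/-- For a measurable set `I ⊆ [0, ∞)` of finite Lebesgue measure `|I|` and every `n ∈ ℕ`,
`(1/n!) ∫_I sⁿ e^{−s} ds ≤ 1 − e^{−|I|}`. -/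
theorem integral_pow_exp_le_of_finite_measure
    (I : Set ℝ) (hImeas : MeasurableSet I) (hIsub : I ⊆ Set.Ici 0)
    (hIfin : volume I ≠ ⊤) (n : ℕ) :
    (1 / (n.factorial : ℝ)) * ∫ s in I, s ^ n * Real.exp (-s)
      ≤ 1 - Real.exp (-(volume I).toReal) := by
  have hFcont : ContinuousOn (Ffun n) (Set.Ici 0) :=
    fun x hx => ((hasDerivAt_Ffun n x hx).continuousAt).continuousWithinAt
  have hinj : Set.InjOn (Ffun n) I := ((Ffun_strictMonoOn n).injOn).mono hIsub
  set J := Ffun n '' I with hJdef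
  have hJmeas : MeasurableSet J :=
    hImeas.image_of_continuousOn_injOn (hFcont.mono hIsub) hinj
  have hF0 : Ffun n 0 = 0 := by simp [Ffun, Gfun_zero]
  have hJsub : J ⊆ Set.Ici 0 := by
    rintro _ ⟨s, hsI, rfl⟩
    have h := (Ffun_strictMonoOn n).monotoneOn Set.self_mem_Ici (hIsub hsI) (hIsub hsI)
    rw [hF0] at h
    exact h
  have hlip : LipschitzOnWith 1 (Ffun n) (Set.Ici 0) := by
    apply (convex_Ici (0:ℝ)).lipschitzOnWith_of_nnnorm_hasFDerivWithin_le
      (f' := fun x => ContinuousLinearMap.smulRight (1 : ℝ →L[ℝ] ℝ) (gfun n x / Gfun n x))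
      (fun x hx => ((hasDerivAt_Ffun n x hx).hasDerivWithinAt).hasFDerivWithinAt)
    intro x hx
    rw [← NNReal.coe_le_coe, coe_nnnorm, NNReal.coe_one,
      ContinuousLinearMap.norm_smulRight_apply, norm_one, one_mul, Real.norm_eq_abs,
      abs_of_nonneg (div_nonneg (gfun_nonneg n x hx) (Gfun_pos n x hx).le)]
    exact div_le_one_of_le₀ (gfun_le_Gfun n x hx) (Gfun_pos n x hx).le
  have hJle : volume J ≤ volume I := by
    have h := (hlip.mono hIsub).hausdorffMeasure_image_le (zero_le_one : (0:ℝ) ≤ 1)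
    simpa [hausdorffMeasure_real] using h
  have hJfin : volume J ≠ ⊤ := fun h => hIfin (top_le_iff.mp (h ▸ hJle))
  have hJtoReal : (volume J).toReal ≤ (volume I).toReal := ENNReal.toReal_mono hIfin hJle
  have hCOV : ∫ u in J, Real.exp (-u) = ∫ s in I, gfun n s := by
    rw [hJdef, integral_image_eq_integral_abs_deriv_smul hImeas
      (fun x hx => (hasDerivAt_Ffun n x (hIsub hx)).hasDerivWithinAt) hinj]
    apply setIntegral_congr_fun hImeas
    intro s hs
    have hs0 : (0:ℝ) ≤ s := hIsub hs
    have hG := Gfun_pos n s hs0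
    show |gfun n s / Gfun n s| • Real.exp (-Ffun n s) = gfun n s
    rw [smul_eq_mul, abs_of_nonneg (div_nonneg (gfun_nonneg n s hs0) hG.le)]
    rw [Ffun, neg_neg, Real.exp_log hG, div_mul_cancel₀ _ hG.ne']
  have hLHS : (1 / (n.factorial : ℝ)) * ∫ s in I, s ^ n * Real.exp (-s)
      = ∫ s in I, gfun n s := by
    rw [← integral_const_mul]
    apply setIntegral_congr_fun hImeas
    intro s _
    simp [gfun, div_eq_mul_inv, mul_comm]
  calc (1 / (n.factorial : ℝ)) * ∫ s in I, s ^ n * Real.exp (-s)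
      = ∫ u in J, Real.exp (-u) := by rw [hLHS, hCOV]
    _ ≤ 1 - Real.exp (-(volume J).toReal) := bathtub_exp J hJmeas hJsub hJfin
    _ ≤ 1 - Real.exp (-(volume I).toReal) := by
        have := Real.exp_le_exp.mpr (neg_le_neg hJtoReal)
        linarith
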